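/- Let β ∈ (0, 1/2) and define G(y) = max(|y - β|, |y - 1/2|) if y < (1 + β)/2, and G(y) = max(|y - 1/2|, |y - 1|) if y ≥ (1 + β)/2. Then for every y ∈ ℝ, G(y) ≥ (β/(1 - β))·|y| + (1/4 - β)/(1 - β). -/

import Mathlib

theorem stmt_4 (β : ℝ) (hβ0 : 0 < β) (hβ1 : β < 1/2) (y : ℝ) :
    (if y < (1 + β)/2 then max |y - β| |y - 1/2| else max |y - 1/2| |y - 1|) ≥
      (β / (1 - β)) * |y| + (1/4 - β) / (1 - β) := by
  have h1 : (0:ℝ) < 1 - β := by linarith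
  rw [ge_iff_le, show (β / (1 - β)) * |y| + (1/4 - β) / (1 - β)
      = (β * |y| + (1/4 - β)) / (1 - β) by field_simp, div_le_iff₀ h1]
  split_ifs with h
  · rcases abs_cases y with ⟨hy, hy'⟩ | ⟨hy, hy'⟩
    · rcases le_total y ((β + 1/2)/2) with hc | hc
      · calc β * |y| + (1/4 - β) ≤ (1/2 - y) * (1 - β) := by rw [hy]; nlinarith
          _ ≤ |y - 1/2| * (1 - β) := by
              have : 1/2 - y ≤ |y - 1/2| := by rw [abs_sub_comm]; exact le_abs_self _
              nlinarith
          _ ≤ max |y - β| |y - 1/2| * (1 - β) := by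
              nlinarith [le_max_right |y - β| |y - 1/2|]
      · calc β * |y| + (1/4 - β) ≤ (y - β) * (1 - β) := by rw [hy]; nlinarith
          _ ≤ |y - β| * (1 - β) := by nlinarith [le_abs_self (y - β)]
          _ ≤ max |y - β| |y - 1/2| * (1 - β) := by
              nlinarith [le_max_left |y - β| |y - 1/2|]
    · calc β * |y| + (1/4 - β) ≤ (1/2 - y) * (1 - β) := by rw [hy]; nlinarith
        _ ≤ |y - 1/2| * (1 - β) := by
            have : 1/2 - y ≤ |y - 1/2| := by rw [abs_sub_comm]; exact le_abs_self _
            nlinarith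
        _ ≤ max |y - β| |y - 1/2| * (1 - β) := by
            nlinarith [le_max_right |y - β| |y - 1/2|]
  · push_neg at h
    have hy : |y| = y := abs_of_nonneg (by nlinarith)
    rcases le_total y (3/4) with hc | hc
    · calc β * |y| + (1/4 - β) ≤ (1 - y) * (1 - β) := by rw [hy]; nlinarith
        _ ≤ |y - 1| * (1 - β) := by
            have : 1 - y ≤ |y - 1| := by rw [abs_sub_comm]; exact le_abs_self _
            nlinarith
        _ ≤ max |y - 1/2| |y - 1| * (1 - β) := by
            nlinarith [le_max_right |y - 1/2| |y - 1|]
    · calc β * |y| + (1/4 - β) ≤ (y - 1/2) * (1 - β) := by rw [hy]; nlinarith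
        _ ≤ |y - 1/2| * (1 - β) := by nlinarith [le_abs_self (y - 1/2)]
        _ ≤ max |y - 1/2| |y - 1| * (1 - β) := by
            nlinarith [le_max_left |y - 1/2| |y - 1|]
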